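/- Let d ≥ 3 and let z_1, …, z_d ∈ ℝ^d be linearly independent vectors such that z̲_1, …, z̲_{d−1} are linearly independent and z̲_2, …, z̲_d are linearly independent in ℝ^{d−1} (so that α_1 and α_2 are well defined). Then |α_1 − α_2| = ( det Λ̲_{2,d−2} · |det(z_1, …, z_d)| ) / ( det Λ̲_{1,d−1} · det Λ̲_{2,d−1} ), where for d = 3 one reads det Λ̲_{2,d−2} = det Λ̲_{2,1} = |z̲_2|. -/

import Mathlib

open scoped InnerProductSpace

noncomputable section

/-- `ℝ^n` with the Euclidean structure. -/
abbrev E (n : ℕ) : Type := EuclideanSpace ℝ (Fin n)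

/-- The projection `x ↦ x̲` forgetting the last coordinate. -/
def pr (d : ℕ) (x : E d) : E (d - 1) :=
  WithLp.toLp 2 (fun i : Fin (d - 1) => x (Fin.castLE (Nat.sub_le d 1) i))

lemma pr_sub (d : ℕ) (x y : E d) : pr d (x - y) = pr d x - pr d y := by
  ext i; simp [pr]

/-- The canonical embedding of `ℤ^d` into `ℝ^d`. -/
def toE (d : ℕ) (z : Fin d → ℤ) : E d := WithLp.toLp 2 (fun i => (z i : ℝ))

/-- The `m`-dimensional volume of the parallelepiped spanned by `v 0, …, v (m-1)`
(square root of the Gram determinant). -/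
def gramVol {n m : ℕ} (v : Fin m → E n) : ℝ :=
  Real.sqrt ((Matrix.of (fun i j : Fin m => ⟪v i, v j⟫_ℝ)).det)

/-- `z` is a best approximation vector for the linear form `L_α : x ↦ ⟪α, x⟫`. -/
def IsBestApprox (d : ℕ) (α : E d) (z : Fin d → ℤ) : Prop :=
  pr d (toE d z) ≠ 0 ∧
  ∀ z' : Fin d → ℤ, pr d (toE d z') ≠ 0 →
    (‖pr d (toE d z')‖ ≤ ‖pr d (toE d z)‖ → |⟪α, toE d z⟫_ℝ| ≤ |⟪α, toE d z'⟫_ℝ|) ∧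
    (‖pr d (toE d z')‖ < ‖pr d (toE d z)‖ → |⟪α, toE d z⟫_ℝ| < |⟪α, toE d z'⟫_ℝ|)

/-- `det Λ̲_{k,l}` for a sequence of integer vectors: the `l`-dimensional volume of the
parallelepiped spanned by `z̲_k, …, z̲_{k+l-1}`. -/
def detL (d : ℕ) (z : ℕ → Fin d → ℤ) (k l : ℕ) : ℝ :=
  gramVol (fun i : Fin l => pr d (toE d (z (k + i.1))))

/-- `D_{k,l} = det Λ̲_{k,l} / |z̲_k|^l`. -/
def Dq (d : ℕ) (z : ℕ → Fin d → ℤ) (k l : ℕ) : ℝ :=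
  detL d z k l / ‖pr d (toE d (z k))‖ ^ l

/-- `B_k = |z̲_{k+1}| / |z̲_k|`. -/
def Bq (d : ℕ) (z : ℕ → Fin d → ℤ) (k : ℕ) : ℝ :=
  ‖pr d (toE d (z (k + 1)))‖ / ‖pr d (toE d (z k))‖

/-- `R_k = 1 / (2 |z̲_{k+1}| det Λ̲_{k,d-1})`. -/
def Rq (d : ℕ) (z : ℕ → Fin d → ℤ) (k : ℕ) : ℝ :=
  1 / (2 * ‖pr d (toE d (z (k + 1)))‖ * detL d z k (d - 1))

/-- `v 0, …, v (d-1)` form a basis of the lattice `ℤ^d`. -/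
def IsZBasis (d : ℕ) (v : Fin d → Fin d → ℤ) : Prop :=
  IsUnit ((Matrix.of (fun i j : Fin d => v j i)).det)

/-- `det Λ̲_{k,l}` for a sequence of real vectors. -/
def detLR (d : ℕ) (z : ℕ → E d) (k l : ℕ) : ℝ :=
  gramVol (fun i : Fin l => pr d (z (k + i.1)))

/-! ### Auxiliary lemmas -/

lemma sum_smul_apply {n k : ℕ} (g : Fin k → ℝ) (v : Fin k → E n) (j : Fin n) :
    (∑ i, g i • v i) j = ∑ i, g i * v i j := by
  rw [WithLp.ofLp_sum, Finset.sum_apply]; rfl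

lemma inner_eq_sum {n : ℕ} (x y : E n) : ⟪x, y⟫_ℝ = ∑ i, x i * y i := by
  simp [PiLp.inner_apply, RCLike.inner_apply, mul_comm]

lemma gramVol_full {n : ℕ} (v : Fin n → E n) :
    gramVol v = |(Matrix.of fun i j => v j i).det| := by
  have h : (Matrix.of (fun i j : Fin n => ⟪v i, v j⟫_ℝ)) =
      (Matrix.of fun i j : Fin n => v j i).transpose * (Matrix.of fun i j : Fin n => v j i) := by
    refine Matrix.ext fun i j => ?_
    simp [Matrix.mul_apply, inner_eq_sum]
  rw [gramVol, h, Matrix.det_mul, Matrix.det_transpose, ← sq, Real.sqrt_sq_eq_abs]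

lemma det_ne_zero_of_li {n : ℕ} (v : Fin n → E n) (h : LinearIndependent ℝ v) :
    (Matrix.of fun i j : Fin n => v j i).det ≠ 0 := by
  intro h0
  obtain ⟨g, hg0, hg⟩ := Matrix.exists_mulVec_eq_zero_iff.2 h0
  refine hg0 ?_
  have hsum : (∑ i, g i • v i) = 0 := by
    ext j
    have := congrFun hg j
    rw [sum_smul_apply]
    simpa [Matrix.mulVec, dotProduct, mul_comm] using this
  have := linearIndependent_iff'.1 h Finset.univ g (by simpa using hsum)
  funext i; exact this i (Finset.mem_univ i)

lemma gramVol_cons_orth {n k : ℕ} (w : E n) (c : Fin k → E n)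
    (h : ∀ i, ⟪w, c i⟫_ℝ = 0) :
    gramVol (Fin.cons w c : Fin (k+1) → E n) = ‖w‖ * gramVol c := by
  have hG : (Matrix.of (fun i j : Fin (k+1) =>
      ⟪(Fin.cons w c : Fin (k+1) → E n) i, (Fin.cons w c : Fin (k+1) → E n) j⟫_ℝ)).det
      = ‖w‖^2 * (Matrix.of (fun i j : Fin k => ⟪c i, c j⟫_ℝ)).det := by
    rw [Matrix.det_succ_row_zero, Finset.sum_eq_single 0]
    · have e1 : (Matrix.of (fun i j : Fin (k+1) =>
          ⟪(Fin.cons w c : Fin (k+1) → E n) i, (Fin.cons w c : Fin (k+1) → E n) j⟫_ℝ)).submatrix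
            Fin.succ (Fin.succAbove 0) = Matrix.of (fun i j : Fin k => ⟪c i, c j⟫_ℝ) := by
        refine Matrix.ext fun i j => ?_
        rw [Matrix.submatrix_apply, Fin.succAbove_zero]
        show ⟪(Fin.cons w c : Fin (k+1) → E n) i.succ, (Fin.cons w c : Fin (k+1) → E n) j.succ⟫_ℝ = _
        rw [Fin.cons_succ, Fin.cons_succ]; rfl
      rw [e1]
      show (-1)^((0:Fin (k+1)):ℕ) * ⟪(Fin.cons w c : Fin (k+1) → E n) 0,
        (Fin.cons w c : Fin (k+1) → E n) 0⟫_ℝ * _ = _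
      rw [Fin.cons_zero, real_inner_self_eq_norm_sq, Fin.val_zero, pow_zero, one_mul]
    · intro j _ hj
      rcases Fin.eq_succ_of_ne_zero hj with ⟨p, rfl⟩
      have hz : ⟪(Fin.cons w c : Fin (k+1) → E n) 0, (Fin.cons w c : Fin (k+1) → E n) p.succ⟫_ℝ
          = 0 := by rw [Fin.cons_zero, Fin.cons_succ]; exact h p
      show (-1)^((p.succ : Fin (k+1)):ℕ) * ⟪(Fin.cons w c : Fin (k+1) → E n) 0,
        (Fin.cons w c : Fin (k+1) → E n) p.succ⟫_ℝ * _ = 0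
      rw [hz]; ring
    · intro h0; exact absurd (Finset.mem_univ _) h0
  rw [gramVol, gramVol, hG, Real.sqrt_mul (sq_nonneg _), Real.sqrt_sq (norm_nonneg _)]

lemma inner_split {n : ℕ} (x y : E (n+1)) :
    ⟪x, y⟫_ℝ = ⟪(show E n from WithLp.toLp 2 fun i => x i.castSucc), (show E n from WithLp.toLp 2 fun i => y i.castSucc)⟫_ℝ
      + x (Fin.last n) * y (Fin.last n) := by
  simp only [PiLp.inner_apply, RCLike.inner_apply, starRingEnd_apply, star_trivial, PiLp.toLp_apply]
  rw [Fin.sum_univ_castSucc]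
  ring

lemma lemmaD {k : ℕ} (u : E (k+1)) (hu : u ≠ 0) (c : Fin k → E (k+1))
    (hc : LinearIndependent ℝ c) (horth : ∀ i, ⟪u, c i⟫_ℝ = 0) (x : E (k+1)) :
    ‖u‖^2 * (Matrix.of fun i j : Fin (k+1) => (Fin.cons x c : Fin (k+1) → E (k+1)) j i).det
      = ⟪u, x⟫_ℝ * (Matrix.of fun i j : Fin (k+1) =>
          (Fin.cons u c : Fin (k+1) → E (k+1)) j i).det := by
  set y : E (k+1) := ‖u‖^2 • x - ⟪u, x⟫_ℝ • u with hy_def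
  have hy : ⟪u, y⟫_ℝ = 0 := by
    rw [hy_def, inner_sub_right, real_inner_smul_right, real_inner_smul_right,
      real_inner_self_eq_norm_sq]
    ring
  have hle : Submodule.span ℝ (Set.range c) ≤ (ℝ ∙ u)ᗮ := by
    rw [Submodule.span_le]
    rintro _ ⟨i, rfl⟩
    exact Submodule.mem_orthogonal_singleton_iff_inner_right.2 (horth i)
  have hfr1 : Module.finrank ℝ (Submodule.span ℝ (Set.range c)) = k := by
    rw [finrank_span_eq_card hc, Fintype.card_fin]
  have hfr2 : Module.finrank ℝ ((ℝ ∙ u)ᗮ : Submodule ℝ (E (k+1))) = k := by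
    have h1 : Module.finrank ℝ (ℝ ∙ u) = 1 := finrank_span_singleton hu
    have h2 := Submodule.finrank_add_finrank_orthogonal (K := ℝ ∙ u) (E := E (k+1))
    rw [h1, finrank_euclideanSpace_fin] at h2
    omega
  have hspan : Submodule.span ℝ (Set.range c) = (ℝ ∙ u)ᗮ :=
    Submodule.eq_of_le_of_finrank_le hle (by rw [hfr1, hfr2])
  have hymem : y ∈ Submodule.span ℝ (Set.range c) := by
    rw [hspan]
    exact Submodule.mem_orthogonal_singleton_iff_inner_right.2 hy
  obtain ⟨g, hg⟩ := Submodule.mem_span_range_iff_exists_fun ℝ |>.1 hymem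
  have hdet0 : (Matrix.of fun i j : Fin (k+1) =>
      (Fin.cons y c : Fin (k+1) → E (k+1)) j i).det = 0 := by
    rw [← Matrix.exists_mulVec_eq_zero_iff]
    refine ⟨Fin.cons (-1) g, ?_, ?_⟩
    · intro h0
      have := congrFun h0 0
      simp at this
    · funext i
      show ∑ j, (Fin.cons y c : Fin (k+1) → E (k+1)) j i * (Fin.cons (-1) g : Fin (k+1) → ℝ) j = 0
      rw [Fin.sum_univ_succ]
      simp only [Fin.cons_zero, Fin.cons_succ]
      have : y i = ∑ p, g p * c p i := by rw [← hg, sum_smul_apply]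
      rw [this]
      rw [Finset.sum_congr rfl (fun p _ => by ring : ∀ p ∈ Finset.univ, c p i * g p = g p * c p i)]
      ring
  have hupd : ∀ v : E (k+1), (Matrix.of fun i j : Fin (k+1) =>
      (Fin.cons v c : Fin (k+1) → E (k+1)) j i) =
      (Matrix.of fun i j : Fin (k+1) =>
        (Fin.cons x c : Fin (k+1) → E (k+1)) j i).updateCol 0 (fun i => v i) := by
    intro v
    refine Matrix.ext fun i j => ?_
    rcases Fin.eq_zero_or_eq_succ j with rfl | ⟨p, rfl⟩
    · simp [Matrix.updateCol_apply]
    · simp [Matrix.updateCol_apply, Fin.succ_ne_zero]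
  have hylin : (fun i => y i) = ‖u‖^2 • (fun i => x i) + (-⟪u, x⟫_ℝ) • (fun i => u i) := by
    funext i
    show (‖u‖^2 • x - ⟪u, x⟫_ℝ • u) i = _
    simp [PiLp.smul_apply, PiLp.sub_apply]
    ring
  have := hdet0
  rw [hupd y, hylin, Matrix.det_updateCol_add, Matrix.det_updateCol_smul,
    Matrix.det_updateCol_smul, ← hupd x, ← hupd u] at this
  rw [← sub_eq_zero]
  linarith [this]

lemma detM_eq {n : ℕ} (α : E (n+1)) (hα : α (Fin.last n) = 1) (v : Fin n → E (n+1))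
    (hperp : ∀ j, ⟪α, v j⟫_ℝ = 0) :
    |(Matrix.of fun i j : Fin (n+1) => (Fin.cons α v : Fin (n+1) → E (n+1)) j i).det|
      = ‖α‖^2 * |(Matrix.of fun i j : Fin n => v j i.castSucc).det| := by
  classical
  set M : Matrix (Fin (n+1)) (Fin (n+1)) ℝ :=
    Matrix.of fun i j : Fin (n+1) => (Fin.cons α v : Fin (n+1) → E (n+1)) j i with hM
  set B : Matrix (Fin n) (Fin n) ℝ := Matrix.of fun i j : Fin n => v j i.castSucc with hB
  set t : Fin n → ℝ := fun j => v j (Fin.last n) with ht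
  set g : Fin (n+1) → ℝ := Fin.cons 0 (fun p => -t p) with hg
  set G : Matrix (Fin (n+1)) (Fin (n+1)) ℝ := Matrix.of fun i j => if i = 0 then g j else 0
    with hG
  set U : Matrix (Fin (n+1)) (Fin (n+1)) ℝ := 1 + G with hU
  have hdetU : U.det = 1 := by
    have htri : U.BlockTriangular id := by
      intro i j hij
      have hij' : (j : Fin (n+1)) < i := hij
      have h1 : i ≠ j := (ne_of_gt hij')
      have h2 : i ≠ 0 := by
        intro h; rw [h] at hij'; exact absurd hij' (by simp)
      simp [hU, hG, Matrix.one_apply, h1, h2]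
    rw [Matrix.det_of_upperTriangular htri]
    have : ∀ i : Fin (n+1), U i i = 1 := by
      intro i
      rcases Fin.eq_zero_or_eq_succ i with rfl | ⟨p, rfl⟩
      · simp [hU, hG, hg, Matrix.one_apply]
      · simp [hU, hG, hg, Matrix.one_apply, (Fin.succ_ne_zero p)]
    simp [this]
  have hMU : ∀ i j, (M * U) i j =
      (Fin.cons α (fun p => fun q => v p q - t p * α q) : Fin (n+1) → Fin (n+1) → ℝ) j i := by
    intro i j
    have hMG : (M * G) i j = M i 0 * g j := by
      rw [Matrix.mul_apply]
      rw [Finset.sum_eq_single 0]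
      · simp [hG]
      · intro k _ hk; simp [hG, hk]
      · intro h0; exact absurd (Finset.mem_univ _) h0
    have : (M * U) i j = M i j + M i 0 * g j := by
      rw [hU, Matrix.mul_add, Matrix.mul_one, Matrix.add_apply, hMG]
    rw [this]
    rcases Fin.eq_zero_or_eq_succ j with rfl | ⟨p, rfl⟩
    · simp [hM, hg]
    · simp only [hM, hg, Matrix.of_apply, Fin.cons_succ, Fin.cons_zero]
      ring
  have hdetM' : M.det = (M * U).det := by rw [Matrix.det_mul, hdetU, mul_one]
  have hlast0 : (M * U) (Fin.last n) 0 = 1 := by rw [hMU]; simpa [hM] using hα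
  have hlastsucc : ∀ p : Fin n, (M * U) (Fin.last n) p.succ = 0 := by
    intro p
    rw [hMU]
    simp only [Fin.cons_succ]
    rw [hα, ht]; ring
  have hexp : (M * U).det = (-1)^(n : ℕ) *
      ((M * U).submatrix (Fin.last n).succAbove (Fin.succAbove 0)).det := by
    rw [Matrix.det_succ_row (M * U) (Fin.last n), Finset.sum_eq_single 0]
    · rw [hlast0]
      simp [Fin.val_last]
    · intro j _ hj
      rcases Fin.eq_succ_of_ne_zero hj with ⟨p, rfl⟩
      rw [hlastsucc p]; ring
    · intro h0; exact absurd (Finset.mem_univ _) h0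
  set ab : Fin n → ℝ := fun i => α i.castSucc with hab
  have htj : ∀ j, t j = -(∑ p, ab p * B p j) := by
    intro j
    have h0 := hperp j
    have : ⟪α, v j⟫_ℝ = ∑ i : Fin (n+1), α i * v j i := by
      simp [PiLp.inner_apply, RCLike.inner_apply, mul_comm]
    rw [this, Fin.sum_univ_castSucc, hα] at h0
    have : ∑ i : Fin n, α i.castSucc * v j i.castSucc = ∑ p, ab p * B p j := by
      refine Finset.sum_congr rfl fun p _ => rfl
    rw [this] at h0
    rw [ht]
    linarith [h0]
  have hminor : (M * U).submatrix (Fin.last n).succAbove (Fin.succAbove 0)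
      = (1 + Matrix.replicateCol Unit ab * Matrix.replicateRow Unit ab) * B := by
    refine Matrix.ext fun i j => ?_
    rw [Matrix.submatrix_apply, Fin.succAbove_last, Fin.succAbove_zero, hMU]
    simp only [Fin.cons_succ]
    rw [Matrix.add_mul, Matrix.one_mul, Matrix.add_apply]
    have hcr : ∀ a b : Fin n, (Matrix.replicateCol Unit ab * Matrix.replicateRow Unit ab) a b = ab a * ab b := by
      intro a b
      rw [Matrix.mul_apply]
      simp [Matrix.replicateCol_apply, Matrix.replicateRow_apply]
    have : (Matrix.replicateCol Unit ab * Matrix.replicateRow Unit ab * B) i j = ab i * ∑ p, ab p * B p j := by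
      rw [Matrix.mul_apply, Finset.mul_sum]
      refine Finset.sum_congr rfl fun p _ => ?_
      rw [hcr]
      ring
    rw [this, htj j]
    simp only [hB, Matrix.of_apply]
    ring
  have hnorm : ‖α‖^2 = 1 + dotProduct ab ab := by
    have h1 : ‖α‖^2 = ∑ i : Fin (n+1), α i * α i := by
      rw [← real_inner_self_eq_norm_sq]
      exact inner_eq_sum α α
    rw [h1, Fin.sum_univ_castSucc, hα, dotProduct]
    have h2 : ∀ i : Fin n, α i.castSucc * α i.castSucc = ab i * ab i := fun i => rfl
    rw [Finset.sum_congr rfl fun i _ => h2 i]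
    ring
  have hdet1 : ((1 + Matrix.replicateCol Unit ab * Matrix.replicateRow Unit ab)).det = 1 + dotProduct ab ab :=
    Matrix.det_one_add_replicateCol_mul_replicateRow ab ab
  calc |M.det| = |(-1)^(n:ℕ) * ((1 + Matrix.replicateCol Unit ab * Matrix.replicateRow Unit ab) * B).det| := by
        rw [hdetM', hexp, hminor]
    _ = ((1 + Matrix.replicateCol Unit ab * Matrix.replicateRow Unit ab)).det * |B.det| := by
        rw [abs_mul, abs_pow, abs_neg, abs_one, one_pow, one_mul, Matrix.det_mul, abs_mul,
          hdet1, abs_of_nonneg]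
        have : (0:ℝ) ≤ dotProduct ab ab := Finset.sum_nonneg fun p _ => mul_self_nonneg _
        linarith
    _ = ‖α‖^2 * |B.det| := by rw [hdet1, ← hnorm]

theorem stmt14 (d : ℕ) (hd : 3 ≤ d) (z : ℕ → E d)
    (hli : LinearIndependent ℝ (fun i : Fin d => z (i.1 + 1)))
    (hlip1 : LinearIndependent ℝ (fun i : Fin (d - 1) => pr d (z (i.1 + 1))))
    (hlip2 : LinearIndependent ℝ (fun i : Fin (d - 1) => pr d (z (i.1 + 2))))
    (α1 : E d) (hα1pi : α1 ⟨d - 1, by omega⟩ = 1)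
    (hα1perp : ∀ i : Fin (d - 1), ⟪α1, z (i.1 + 1)⟫_ℝ = 0)
    (α2 : E d) (hα2pi : α2 ⟨d - 1, by omega⟩ = 1)
    (hα2perp : ∀ i : Fin (d - 1), ⟪α2, z (i.1 + 2)⟫_ℝ = 0) :
    ‖α1 - α2‖ =
      detLR d z 2 (d - 2) * |(Matrix.of (fun i j : Fin d => z (j.1 + 1) i)).det| /
        (detLR d z 1 (d - 1) * detLR d z 2 (d - 1)) := by
  obtain ⟨m, rfl⟩ : ∃ m, d = m + 3 := ⟨d - 3, by omega⟩
  have hα1last : α1 (Fin.last (m+2)) = 1 := hα1pi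
  have hα2last : α2 (Fin.last (m+2)) = 1 := hα2pi
  have hsub_last : (α1 - α2) (Fin.last (m+2)) = 0 := by
    have h : (α1 - α2) (Fin.last (m+2)) = α1 (Fin.last (m+2)) - α2 (Fin.last (m+2)) := rfl
    rw [h, hα1last, hα2last, sub_self]
  set w : E (m+2) := pr (m+3) α1 - pr (m+3) α2 with hw_def
  set c : Fin (m+1) → E (m+2) := fun i => pr (m+3) (z (i.1+2)) with hc_def
  set A : Matrix (Fin (m+2)) (Fin (m+2)) ℝ :=
    Matrix.of (fun i j : Fin (m+2) => pr (m+3) (z (j.1+1)) i) with hA_def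
  set B : Matrix (Fin (m+2)) (Fin (m+2)) ℝ :=
    Matrix.of (fun i j : Fin (m+2) => pr (m+3) (z (j.1+2)) i) with hB_def
  have hsplit : ∀ x y : E (m+3), ⟪x, y⟫_ℝ =
      ⟪pr (m+3) x, pr (m+3) y⟫_ℝ + x (Fin.last (m+2)) * y (Fin.last (m+2)) :=
    fun x y => inner_split x y
  -- linear independence facts
  have hA0 : A.det ≠ 0 := by
    rw [hA_def]
    exact det_ne_zero_of_li (fun j : Fin (m+2) => pr (m+3) (z (j.1+1))) hlip1
  have hB0 : B.det ≠ 0 := by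
    rw [hB_def]
    exact det_ne_zero_of_li (fun j : Fin (m+2) => pr (m+3) (z (j.1+2))) hlip2
  have hcli : LinearIndependent ℝ c := by
    have h := hlip2.comp (Fin.castLE (show m+1 ≤ m+2 by omega) : Fin (m+1) → Fin (m+2))
      (Fin.castLE_injective _)
    exact h
  -- w is orthogonal to the c i
  have hwperp : ∀ i : Fin (m+1), ⟪w, c i⟫_ℝ = 0 := by
    intro i
    have h1 : ⟪α1, z (i.1+2)⟫_ℝ = 0 := hα1perp ⟨i.1+1, by omega⟩
    have h2 : ⟪α2, z (i.1+2)⟫_ℝ = 0 := hα2perp ⟨i.1, by omega⟩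
    have h3 : ⟪α1 - α2, z (i.1+2)⟫_ℝ = 0 := by rw [inner_sub_left, h1, h2, sub_zero]
    have h4 := hsplit (α1 - α2) (z (i.1+2))
    rw [h3, hsub_last, zero_mul, add_zero, pr_sub] at h4
    exact h4.symm
  -- w ≠ 0
  have hw0 : w ≠ 0 := by
    intro hw
    have heq : α1 = α2 := by
      ext i
      by_cases h : (i:ℕ) < m+2
      · have e : Fin.castSucc (⟨i.1, h⟩ : Fin (m+2)) = i := Fin.ext rfl
        have h0 : α1 (Fin.castSucc (⟨i.1, h⟩ : Fin (m+2)))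
            - α2 (Fin.castSucc (⟨i.1, h⟩ : Fin (m+2))) = 0 := by
            have := congrArg (fun v : E (m+2) => v ⟨i.1, h⟩) hw
            simpa [hw_def, pr] using this
        rw [e] at h0
        exact sub_eq_zero.1 h0
      · have hieq : i = Fin.last (m+2) := Fin.ext (by simpa [Fin.val_last] using by omega)
        rw [hieq, hα1last, hα2last]
    have hall : ∀ i : Fin (m+3), ⟪α1, z (i.1+1)⟫_ℝ = 0 := by
      intro i
      by_cases h : (i:ℕ) < m+2
      · exact hα1perp ⟨i.1, h⟩
      · have h3 := hα2perp ⟨m+1, by omega⟩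
        rw [heq]
        have h4 : i.1 + 1 = (m+1)+2 := by omega
        rw [h4]
        exact h3
    have hspan : Submodule.span ℝ (Set.range (fun i : Fin (m+3) => z (i.1+1))) = ⊤ :=
      hli.span_eq_top_of_card_eq_finrank (by simp [finrank_euclideanSpace_fin])
    have hle' : Submodule.span ℝ (Set.range (fun i : Fin (m+3) => z (i.1+1))) ≤ (ℝ ∙ α1)ᗮ := by
      rw [Submodule.span_le]
      rintro _ ⟨i, rfl⟩
      exact Submodule.mem_orthogonal_singleton_iff_inner_right.2 (hall i)
    rw [hspan] at hle'
    have h0 : ⟪α1, α1⟫_ℝ = 0 :=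
      Submodule.mem_orthogonal_singleton_iff_inner_right.1 (hle' Submodule.mem_top)
    have h1 : α1 = 0 := inner_self_eq_zero.1 h0
    rw [h1] at hα1last
    simpa using hα1last
  -- key identities
  have key1 := lemmaD (k := m+1) w hw0 c hcli hwperp (pr (m+3) (z 1))
  have hconsA : (Matrix.of fun i j : Fin (m+2) =>
      (Fin.cons (pr (m+3) (z 1)) c : Fin (m+2) → E (m+2)) j i) = A := by
    refine Matrix.ext fun i j => ?_
    rcases Fin.eq_zero_or_eq_succ j with rfl | ⟨p, rfl⟩ <;> rfl
  rw [hconsA] at key1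
  have key2 : |(Matrix.of fun i j : Fin (m+2) =>
      (Fin.cons w c : Fin (m+2) → E (m+2)) j i).det| = ‖w‖ * gramVol c := by
    rw [← gramVol_full]
    exact gramVol_cons_orth w c hwperp
  have hα2ne : α2 ≠ 0 := by
    intro h; rw [h] at hα2last; simpa using hα2last
  have hc'li : LinearIndependent ℝ (fun i : Fin (m+2) => z (i.1+2)) := by
    have h := hli.comp Fin.succ (Fin.succ_injective _)
    exact h
  have key3 := lemmaD (k := m+2) α2 hα2ne (fun i : Fin (m+2) => z (i.1+2)) hc'li hα2perp (z 1)
  have hconsZ : (Matrix.of fun i j : Fin (m+3) =>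
      (Fin.cons (z 1) (fun i : Fin (m+2) => z (i.1+2)) : Fin (m+3) → E (m+3)) j i)
      = Matrix.of (fun i j : Fin (m+3) => z (j.1+1) i) := by
    refine Matrix.ext fun i j => ?_
    rcases Fin.eq_zero_or_eq_succ j with rfl | ⟨p, rfl⟩ <;> rfl
  rw [hconsZ] at key3
  have key4 := detM_eq (n := m+2) α2 hα2last (fun i : Fin (m+2) => z (i.1+2)) hα2perp
  have hBmat : (Matrix.of fun i j : Fin (m+2) => z (j.1+2) (Fin.castSucc i)) = B :=
    Matrix.ext fun i j => rfl
  rw [hBmat] at key4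
  -- the inner product relation
  have hinner : ⟪w, pr (m+3) (z 1)⟫_ℝ = -⟪α2, z 1⟫_ℝ := by
    have h := hsplit (α1 - α2) (z 1)
    rw [hsub_last, zero_mul, add_zero, pr_sub] at h
    have h' : ⟪w, pr (m+3) (z 1)⟫_ℝ = ⟪α1 - α2, z 1⟫_ℝ := h.symm
    rw [h', inner_sub_left, (hα1perp ⟨0, by omega⟩ : ⟪α1, z 1⟫_ℝ = 0)]
    ring
  -- |Z.det| = |⟪α2, z 1⟫| * |B.det|
  have hZB : |(Matrix.of (fun i j : Fin (m+3) => z (j.1+1) i)).det|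
      = |⟪α2, z 1⟫_ℝ| * |B.det| := by
    have h := congrArg abs key3
    rw [abs_mul, abs_mul, key4, abs_of_nonneg (sq_nonneg ‖α2‖)] at h
    have hn2 : ‖α2‖^2 ≠ 0 := pow_ne_zero 2 (norm_ne_zero_iff.2 hα2ne)
    apply mul_left_cancel₀ hn2
    rw [h]; ring
  -- ‖w‖ * |A.det| = |⟪α2, z 1⟫| * gramVol c
  have hwA : ‖w‖ * |A.det| = |⟪α2, z 1⟫_ℝ| * gramVol c := by
    have h := congrArg abs key1
    rw [abs_mul, abs_mul, key2, abs_of_nonneg (sq_nonneg ‖w‖), hinner, abs_neg] at h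
    have hnw : ‖w‖ ≠ 0 := norm_ne_zero_iff.2 hw0
    have h2 : ‖w‖ * (‖w‖ * |A.det|) = ‖w‖ * (|⟪α2, z 1⟫_ℝ| * gramVol c) := by
      rw [← mul_assoc, ← sq]
      rw [h]; ring
    exact mul_left_cancel₀ hnw h2
  -- norm equality
  have hnorm : ‖α1 - α2‖ = ‖w‖ := by
    have h := hsplit (α1 - α2) (α1 - α2)
    rw [hsub_last, mul_zero, add_zero, pr_sub] at h
    have h1 : ‖α1 - α2‖^2 = ‖w‖^2 := by
      rw [← real_inner_self_eq_norm_sq, ← real_inner_self_eq_norm_sq]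
      exact h
    calc ‖α1 - α2‖ = Real.sqrt (‖α1 - α2‖^2) := (Real.sqrt_sq (norm_nonneg _)).symm
      _ = Real.sqrt (‖w‖^2) := by rw [h1]
      _ = ‖w‖ := Real.sqrt_sq (norm_nonneg _)
  -- rewrite the detLR quantities
  have hgoal1 : detLR (m+3) z 1 (m+3-1) = |A.det| := by
    have h1 : (fun i : Fin (m+2) => pr (m+3) (z (1+i.1)))
        = fun i : Fin (m+2) => pr (m+3) (z (i.1+1)) := by
      funext i; rw [Nat.add_comm 1 i.1]
    show gramVol (fun i : Fin (m+2) => pr (m+3) (z (1+i.1))) = _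
    rw [h1, hA_def]
    exact gramVol_full _
  have hgoal2 : detLR (m+3) z 2 (m+3-1) = |B.det| := by
    have h1 : (fun i : Fin (m+2) => pr (m+3) (z (2+i.1)))
        = fun i : Fin (m+2) => pr (m+3) (z (i.1+2)) := by
      funext i; rw [Nat.add_comm 2 i.1]
    show gramVol (fun i : Fin (m+2) => pr (m+3) (z (2+i.1))) = _
    rw [h1, hB_def]
    exact gramVol_full _
  have hgoal3 : detLR (m+3) z 2 (m+3-2) = gramVol c := by
    have h1 : (fun i : Fin (m+1) => pr (m+3) (z (2+i.1)))
        = fun i : Fin (m+1) => pr (m+3) (z (i.1+2)) := by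
      funext i; rw [Nat.add_comm 2 i.1]
    show gramVol (fun i : Fin (m+1) => pr (m+3) (z (2+i.1))) = _
    rw [h1, hc_def]
  rw [hnorm, hgoal1, hgoal2, hgoal3, hZB]
  have hAne : |A.det| ≠ 0 := abs_ne_zero.2 hA0
  have hBne : |B.det| ≠ 0 := abs_ne_zero.2 hB0
  rw [eq_div_iff (mul_ne_zero hAne hBne)]
  linear_combination |B.det| * hwA
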